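/- Given a conditional next-token model, the induced probability of producing a sentence w₁⋯wₙ followed by the stop symbol, namely P(w₁|s)·P(w₂|s w₁)·…·P(wₙ|s w₁⋯w_{n−1})·P(∅|s w₁⋯wₙ), defines a sub-probability distribution on the set of all finite sentences: the sum over all finite sentences of these products is at most 1. -/

import Mathlib

/-- The probability that the model, given prompt `s`, outputs the sentence `s'`
and then stops: the product of next-token probabilities followed by the stop
probability (`none` plays the role of the stop symbol ∅). -/
noncomputable def nextTokenProb {W : Type*} (P : List W → Option W → ℝ)
    (s s' : List W) : ℝ :=
  (∏ i ∈ Finset.range s'.length, P (s ++ s'.take i) s'[i]?) * P (s ++ s') none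

lemma nextTokenProb_nil {W : Type*} (P : List W → Option W → ℝ) (s : List W) :
    nextTokenProb P s [] = P s none := by
  simp [nextTokenProb]

lemma nextTokenProb_cons {W : Type*} (P : List W → Option W → ℝ) (s : List W)
    (w : W) (t : List W) :
    nextTokenProb P s (w :: t) = P s (some w) * nextTokenProb P (s ++ [w]) t := by
  unfold nextTokenProb
  have hlen : (w :: t).length = t.length + 1 := rfl
  rw [hlen, Finset.prod_range_succ']
  have h0 : P (s ++ (w :: t).take 0) (w :: t)[0]? = P s (some w) := by simp
  have hsucc : ∀ i, P (s ++ (w :: t).take (i + 1)) (w :: t)[i + 1]?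
      = P ((s ++ [w]) ++ t.take i) t[i]? := by
    intro i
    simp [List.take_succ_cons, List.append_assoc]
  have happ : s ++ w :: t = (s ++ [w]) ++ t := by simp
  rw [h0, happ]
  rw [Finset.prod_congr rfl fun i _ => hsucc i]
  ring

lemma nextTokenProb_nonneg {W : Type*} (P : List W → Option W → ℝ)
    (hnonneg : ∀ s o, 0 ≤ P s o) (s s' : List W) :
    0 ≤ nextTokenProb P s s' :=
  mul_nonneg (Finset.prod_nonneg fun _ _ => hnonneg _ _) (hnonneg _ _)

lemma P_le_one {W : Type*} [Fintype W] (P : List W → Option W → ℝ)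
    (hnonneg : ∀ s o, 0 ≤ P s o)
    (hsum : ∀ s, ∑ o : Option W, P s o = 1) (s : List W) (o : Option W) :
    P s o ≤ 1 := by
  rw [← hsum s]
  exact Finset.single_le_sum (fun o _ => hnonneg s o) (Finset.mem_univ o)

/-- Truncated sums are bounded by 1. -/
lemma trunc_le_one {W : Type*} [Fintype W] (P : List W → Option W → ℝ)
    (hnonneg : ∀ s o, 0 ≤ P s o)
    (hsum : ∀ s, ∑ o : Option W, P s o = 1) :
    ∀ (n : ℕ) (s : List W),
      (∑' t : List W, if t.length ≤ n then ENNReal.ofReal (nextTokenProb P s t) else 0) ≤ 1 := by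
  intro n
  induction n with
  | zero =>
    intro s
    have h : (∑' t : List W, if t.length ≤ 0 then ENNReal.ofReal (nextTokenProb P s t) else 0)
        = ENNReal.ofReal (nextTokenProb P s []) := by
      refine tsum_eq_single ([] : List W) ?_
      intro t ht
      rw [if_neg]
      simp only [Nat.le_zero, List.length_eq_zero_iff]
      exact ht
    rw [h, nextTokenProb_nil]
    exact ENNReal.ofReal_le_one.mpr (P_le_one P hnonneg hsum s none)
  | succ n ih =>
    intro s
    classical
    rw [ENNReal.tsum_eq_add_tsum_ite ([] : List W)]
    have hnil : (if ([] : List W).length ≤ n + 1 then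
        ENNReal.ofReal (nextTokenProb P s []) else 0) = ENNReal.ofReal (P s none) := by
      rw [if_pos (by simp), nextTokenProb_nil]
    rw [hnil]
    have htotal : ENNReal.ofReal (P s none) + ∑' w : W, ENNReal.ofReal (P s (some w)) = 1 := by
      rw [tsum_fintype, ← ENNReal.ofReal_sum_of_nonneg (fun w _ => hnonneg s (some w)),
        ← ENNReal.ofReal_add (hnonneg s none) (Finset.sum_nonneg fun w _ => hnonneg s (some w))]
      have : P s none + ∑ w : W, P s (some w) = ∑ o : Option W, P s o := by
        rw [Fintype.sum_option]
      rw [this, hsum s, ENNReal.ofReal_one]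
    refine le_trans (add_le_add_right ?_ (ENNReal.ofReal (P s none))) htotal.le
    -- rewrite the remaining sum as a sum over W × List W via cons
    have hinj : Function.Injective (fun p : W × List W => p.1 :: p.2) := by
      intro p q h
      simp only [List.cons.injEq] at h
      exact Prod.ext h.1 h.2
    have hsupp : Function.support (fun t : List W => if t = ([] : List W) then 0
        else if t.length ≤ n + 1 then ENNReal.ofReal (nextTokenProb P s t) else 0)
        ⊆ Set.range (fun p : W × List W => p.1 :: p.2) := by
      intro t ht
      rcases t with _ | ⟨w, t⟩
      · simp at ht
      · exact ⟨(w, t), rfl⟩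
    have hrw : (∑' t : List W, if t = ([] : List W) then 0
          else if t.length ≤ n + 1 then ENNReal.ofReal (nextTokenProb P s t) else 0)
        = ∑' p : W × List W, if (p.1 :: p.2) = ([] : List W) then 0
          else if (p.1 :: p.2).length ≤ n + 1 then
            ENNReal.ofReal (nextTokenProb P s (p.1 :: p.2)) else 0 :=
      (Function.Injective.tsum_eq hinj hsupp).symm
    have final : (∑' t : List W, if t = ([] : List W) then 0
        else if t.length ≤ n + 1 then ENNReal.ofReal (nextTokenProb P s t) else 0)
        ≤ ∑' w : W, ENNReal.ofReal (P s (some w)) := by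
      rw [hrw, ENNReal.tsum_prod (f := fun (w : W) (t : List W) =>
        if (w :: t) = ([] : List W) then 0
        else if (w :: t).length ≤ n + 1 then ENNReal.ofReal (nextTokenProb P s (w :: t)) else 0)]
      refine ENNReal.tsum_le_tsum fun w => ?_
      have hshape : ∀ t : List W, (if (w :: t) = ([] : List W) then 0
          else if (w :: t).length ≤ n + 1 then ENNReal.ofReal (nextTokenProb P s (w :: t)) else 0)
          = ENNReal.ofReal (P s (some w)) *
            (if t.length ≤ n then ENNReal.ofReal (nextTokenProb P (s ++ [w]) t) else 0) := by
        intro t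
        simp only [List.length_cons, if_neg (List.cons_ne_nil w t), Nat.add_le_add_iff_right]
        by_cases h : t.length ≤ n
        · rw [if_pos h, if_pos h, nextTokenProb_cons,
            ENNReal.ofReal_mul (hnonneg s (some w))]
        · rw [if_neg h, if_neg h, mul_zero]
      calc (∑' t : List W, if (w :: t) = ([] : List W) then 0
            else if (w :: t).length ≤ n + 1 then ENNReal.ofReal (nextTokenProb P s (w :: t)) else 0)
          = ENNReal.ofReal (P s (some w)) *
            ∑' t : List W, (if t.length ≤ n then
              ENNReal.ofReal (nextTokenProb P (s ++ [w]) t) else 0) := by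
            rw [← ENNReal.tsum_mul_left]
            exact tsum_congr hshape
        _ ≤ ENNReal.ofReal (P s (some w)) * 1 :=
            mul_le_mul_right (ih (s ++ [w])) _
        _ = ENNReal.ofReal (P s (some w)) := mul_one _
    refine le_trans (le_of_eq ?_) final
    congr!

theorem subprobability_of_generation {W : Type*} [Fintype W]
    (P : List W → Option W → ℝ)
    (hnonneg : ∀ s o, 0 ≤ P s o)
    (hsum : ∀ s, ∑ o : Option W, P s o = 1)
    (s : List W) :
    ∑' s' : List W, ENNReal.ofReal (nextTokenProb P s s') ≤ 1 := by
  rw [ENNReal.tsum_eq_iSup_sum]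
  refine iSup_le fun F => ?_
  set n : ℕ := F.sup List.length with hn
  have h1 : (∑ t ∈ F, ENNReal.ofReal (nextTokenProb P s t))
      = ∑ t ∈ F, (if t.length ≤ n then ENNReal.ofReal (nextTokenProb P s t) else 0) := by
    refine Finset.sum_congr rfl fun t ht => ?_
    rw [if_pos (Finset.le_sup ht)]
  rw [h1]
  calc (∑ t ∈ F, (if t.length ≤ n then ENNReal.ofReal (nextTokenProb P s t) else 0))
      ≤ ∑' t : List W, (if t.length ≤ n then ENNReal.ofReal (nextTokenProb P s t) else 0) :=
        ENNReal.sum_le_tsum F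
    _ ≤ 1 := trunc_le_one P hnonneg hsum n s
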